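/- Let $A$ be a left-symmetric conformal algebra and $M$ a conformal module over $A$. Define a $\lambda$-action on $\mathrm{CHom}(A,M)$ by $(a_\lambda f)_{\lambda+\mu}(b) = a_\lambda(f_\mu(b)) + (f_\mu(a))_{\lambda+\mu} b - f_\mu(a_\lambda b)$. Then $\mathrm{CHom}(A,M)$ is a conformal module over the sub-adjacent Lie conformal algebra $g(A)$. -/

import Mathlib

/- Encoding conventions.
A `ℂ[∂]`-module is encoded as a complex vector space `A` together with an
endomorphism `D : Module.End ℂ A` (the action of `∂`).
A polynomial `Σ cₙ λⁿ ∈ A[λ]` is encoded by its coefficient family `ℕ →₀ A`,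
and `ev l p` is its evaluation at `λ = l`.  Since `ℂ` is infinite, a polynomial
identity in the formal variables `λ, μ, …` is equivalent to the corresponding
family of identities for all complex values of the variables, which is how all
axioms are stated below.
A `λ`-product `a ⊗ b ↦ a_λ b ∈ A[λ]` is encoded as `mul : A → A → (ℕ →₀ A)`
(the coefficients of `a_λ b`), its evaluation at `λ = l` being `ev l (mul a b)`.
`substNeg D p` is the result of substituting the variable of `p` by `-∂-λ`:
it is again a polynomial in `λ` with coefficients `ℕ →₀ A`, so that
`b_{-∂-λ} a` is encoded as `substNeg D (mul b a)` (as a polynomial in `λ`). -/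

namespace LSCpaper

open Finsupp

variable {A M V : Type*} [AddCommGroup A] [Module ℂ A] [AddCommGroup M] [Module ℂ M]
  [AddCommGroup V] [Module ℂ V]

/-- Evaluation of a polynomial with coefficients in `V` at a complex number. -/
noncomputable def ev (l : ℂ) (p : ℕ →₀ V) : V := p.sum fun n c => l ^ n • c

/-- Substitution of `-∂ - λ` for the variable of `p`; the result is the
coefficient family (in `λ`) of the resulting polynomial. -/
noncomputable def substNeg (D : Module.End ℂ A) (p : ℕ →₀ A) : ℕ →₀ A :=
  p.sum fun i c => ∑ k ∈ Finset.range (i + 1),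
    Finsupp.single k ((((-1 : ℂ) ^ k * (i.choose k : ℂ))) • ((-D) ^ (i - k)) c)

/-- `ℂ`-bilinearity of a `λ`-product. -/
def Bilin (f : A → M → ℕ →₀ V) : Prop :=
  (∀ a a' b, f (a + a') b = f a b + f a' b) ∧
  (∀ (r : ℂ) (a : A) (b : M), f (r • a) b = r • f a b) ∧
  (∀ a b b', f a (b + b') = f a b + f a b') ∧
  (∀ (r : ℂ) (a : A) (b : M), f a (r • b) = r • f a b)

/-- `A` with `∂`-action `D` and `λ`-product `mul` is a left-symmetric conformal
algebra. -/
structure IsLSC (D : Module.End ℂ A) (mul : A → A → ℕ →₀ A) : Prop where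
  bilin : Bilin mul
  sesq1 : ∀ (l : ℂ) (a b : A), ev l (mul (D a) b) = (-l) • ev l (mul a b)
  sesq2 : ∀ (l : ℂ) (a b : A), ev l (mul a (D b)) = D (ev l (mul a b)) + l • ev l (mul a b)
  lsym : ∀ (l m : ℂ) (a b c : A),
    ev (l + m) (mul (ev l (mul a b)) c) - ev l (mul a (ev m (mul b c))) =
      ev (l + m) (mul (ev m (mul b a)) c) - ev m (mul b (ev l (mul a c)))

/-- `A` with `∂`-action `D` and `λ`-bracket `br` is a Lie conformal algebra. -/
structure IsLieConf (D : Module.End ℂ A) (br : A → A → ℕ →₀ A) : Prop where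
  bilin : Bilin br
  sesq1 : ∀ (l : ℂ) (a b : A), ev l (br (D a) b) = (-l) • ev l (br a b)
  sesq2 : ∀ (l : ℂ) (a b : A), ev l (br a (D b)) = D (ev l (br a b)) + l • ev l (br a b)
  skew : ∀ (l : ℂ) (a b : A), ev l (br a b) = - ev l (substNeg D (br b a))
  jacobi : ∀ (l m : ℂ) (a b c : A),
    ev l (br a (ev m (br b c))) =
      ev (l + m) (br (ev l (br a b)) c) + ev m (br b (ev l (br a c)))

/-- The evaluated bracket `[a_λ b] = a_λ b - b_{-∂-λ} a` of the sub-adjacent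
Lie conformal algebra. -/
noncomputable def brEv (D : Module.End ℂ A) (mul : A → A → ℕ →₀ A) (l : ℂ) (a b : A) : A :=
  ev l (mul a b) - ev l (substNeg D (mul b a))

end LSCpaper

namespace LSCpaper

variable {A M : Type*} [AddCommGroup A] [Module ℂ A] [AddCommGroup M] [Module ℂ M]

/-- `(M, la, ra)` is a conformal module over the left-symmetric conformal
algebra `(A, D, mul)`.  Here `la a v` encodes `a_λ v ∈ M[λ]` and `ra v a`
encodes `v_λ a ∈ M[λ]`. -/
structure IsLSCMod (D : Module.End ℂ A) (Dm : Module.End ℂ M)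
    (mul : A → A → ℕ →₀ A) (la : A → M → ℕ →₀ M) (ra : M → A → ℕ →₀ M) : Prop where
  lbilin : Bilin la
  rbilin : Bilin ra
  lsesq1 : ∀ (l : ℂ) (a : A) (v : M), ev l (la (D a) v) = (-l) • ev l (la a v)
  lsesq2 : ∀ (l : ℂ) (a : A) (v : M),
    ev l (la a (Dm v)) = Dm (ev l (la a v)) + l • ev l (la a v)
  rsesq1 : ∀ (l : ℂ) (v : M) (a : A), ev l (ra (Dm v) a) = (-l) • ev l (ra v a)
  rsesq2 : ∀ (l : ℂ) (v : M) (a : A),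
    ev l (ra v (D a)) = Dm (ev l (ra v a)) + l • ev l (ra v a)
  lcomp : ∀ (l m : ℂ) (a b : A) (v : M),
    ev (l + m) (la (ev l (mul a b)) v) - ev l (la a (ev m (la b v))) =
      ev (l + m) (la (ev m (mul b a)) v) - ev m (la b (ev l (la a v)))
  rcomp : ∀ (l m : ℂ) (a : A) (v : M) (b : A),
    ev (l + m) (ra (ev l (la a v)) b) - ev l (la a (ev m (ra v b))) =
      ev (l + m) (ra (ev m (ra v a)) b) - ev m (ra v (ev l (mul a b)))

/-- Combine an `A`-valued and an `M`-valued polynomial into an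
`(A × M)`-valued polynomial. -/
noncomputable def pairF (p : ℕ →₀ A) (q : ℕ →₀ M) : ℕ →₀ (A × M) :=
  Finsupp.mapRange (fun x => (x, (0 : M))) rfl p +
    Finsupp.mapRange (fun y => ((0 : A), y)) rfl q

end LSCpaper

namespace LSCpaper

variable {A M : Type*} [AddCommGroup A] [Module ℂ A] [AddCommGroup M] [Module ℂ M]

/-- `f` encodes a conformal linear map `A → M[λ]` (an element of
`CHom(A, M)`): `f a` is the coefficient family of `f_λ(a)`. -/
def ConfLin (D : Module.End ℂ A) (Dm : Module.End ℂ M) (f : A → ℕ →₀ M) : Prop :=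
  (∀ a a', f (a + a') = f a + f a') ∧
  (∀ (r : ℂ) (a : A), f (r • a) = r • f a) ∧
  (∀ (l : ℂ) (a : A), ev l (f (D a)) = Dm (ev l (f a)) + l • ev l (f a))

/-- The action of `∂` on `CHom(A, M)`: `(∂ f)_λ = -λ f_λ`. -/
noncomputable def Dhom (f : A → ℕ →₀ M) : A → ℕ →₀ M :=
  fun b => - Finsupp.mapDomain (· + 1) (f b)

/-- The evaluated `g(A)`-action on `CHom(A, M)`:
`Tact mul la ra l m a f b = ((a_λ f)_{λ+μ}) (b)` at `λ = l`, `μ = m`, i.e.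
`a_λ (f_μ(b)) + (f_μ(a))_{λ+μ} b - f_μ(a_λ b)`. -/
noncomputable def Tact (mul : A → A → ℕ →₀ A) (la : A → M → ℕ →₀ M)
    (ra : M → A → ℕ →₀ M) (l m : ℂ) (a : A) (f : A → ℕ →₀ M) (b : A) : M :=
  ev l (la a (ev m (f b))) + ev (l + m) (ra (ev m (f a)) b) - ev m (f (ev l (mul a b)))

end LSCpaper
namespace LSCpaper

section Aux

open Finsupp

variable {A M V : Type*} [AddCommGroup A] [Module ℂ A] [AddCommGroup M] [Module ℂ M]
  [AddCommGroup V] [Module ℂ V]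

/-- `ev l` as a linear map. -/
noncomputable def evL (l : ℂ) : (ℕ →₀ V) →ₗ[ℂ] V :=
  Finsupp.lsum ℂ fun n => (l ^ n) • (LinearMap.id : V →ₗ[ℂ] V)

lemma ev_eq_evL (l : ℂ) (p : ℕ →₀ V) : ev l p = evL l p := by
  simp [ev, evL, Finsupp.lsum_apply, Finsupp.sum]

lemma ev_zero (l : ℂ) : ev l (0 : ℕ →₀ V) = 0 := by
  simp [ev_eq_evL]

lemma ev_add (l : ℂ) (p q : ℕ →₀ V) : ev l (p + q) = ev l p + ev l q := by
  simp [ev_eq_evL]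

lemma ev_sub (l : ℂ) (p q : ℕ →₀ V) : ev l (p - q) = ev l p - ev l q := by
  simp [ev_eq_evL]

lemma ev_neg (l : ℂ) (p : ℕ →₀ V) : ev l (-p) = - ev l p := by
  simp [ev_eq_evL]

lemma ev_smul (l r : ℂ) (p : ℕ →₀ V) : ev l (r • p) = r • ev l p := by
  simp [ev_eq_evL]

lemma ev_sum {ι : Type*} (l : ℂ) (s : Finset ι) (h : ι → (ℕ →₀ V)) :
    ev l (∑ i ∈ s, h i) = ∑ i ∈ s, ev l (h i) := by
  simp [ev_eq_evL]

lemma ev_single (l : ℂ) (n : ℕ) (c : V) : ev l (Finsupp.single n c) = l ^ n • c :=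
  Finsupp.sum_single_index (smul_zero _)

lemma ev_mapDomain (l : ℂ) (p : ℕ →₀ V) :
    ev l (Finsupp.mapDomain (· + 1) p) = l • ev l p := by
  unfold ev
  rw [Finsupp.sum_mapDomain_index (fun n => smul_zero _) (fun n x y => smul_add _ x y),
    Finsupp.smul_sum]
  exact Finsupp.sum_congr fun n _ => by rw [pow_succ', mul_smul]

section BilinLemmas

variable {op : A → M → ℕ →₀ V} (h : Bilin op)
include h

/-- The left partial map of a bilinear `λ`-product, as a linear map. -/
noncomputable def leftLM (v : M) : A →ₗ[ℂ] (ℕ →₀ V) where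
  toFun a := op a v
  map_add' a a' := h.1 a a' v
  map_smul' r a := h.2.1 r a v

/-- The right partial map of a bilinear `λ`-product, as a linear map. -/
noncomputable def rightLM (a : A) : M →ₗ[ℂ] (ℕ →₀ V) where
  toFun v := op a v
  map_add' := h.2.2.1 a
  map_smul' r v := h.2.2.2 r a v

lemma bl_add₁ (a a' : A) (v : M) : op (a + a') v = op a v + op a' v := h.1 a a' v
lemma bl_smul₁ (r : ℂ) (a : A) (v : M) : op (r • a) v = r • op a v := h.2.1 r a v
lemma bl_sub₁ (a a' : A) (v : M) : op (a - a') v = op a v - op a' v :=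
  map_sub (leftLM h v) a a'
lemma bl_neg₁ (a : A) (v : M) : op (-a) v = - op a v := map_neg (leftLM h v) a
lemma bl_zero₁ (v : M) : op 0 v = 0 := map_zero (leftLM h v)
lemma bl_sum₁ {ι : Type*} (s : Finset ι) (g : ι → A) (v : M) :
    op (∑ i ∈ s, g i) v = ∑ i ∈ s, op (g i) v := map_sum (leftLM h v) g s

lemma bl_add₂ (a : A) (v v' : M) : op a (v + v') = op a v + op a v' := h.2.2.1 a v v'
lemma bl_smul₂ (r : ℂ) (a : A) (v : M) : op a (r • v) = r • op a v := h.2.2.2 r a v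
lemma bl_sub₂ (a : A) (v v' : M) : op a (v - v') = op a v - op a v' :=
  map_sub (rightLM h a) v v'
lemma bl_neg₂ (a : A) (v : M) : op a (-v) = - op a v := map_neg (rightLM h a) v
lemma bl_zero₂ (a : A) : op a 0 = 0 := map_zero (rightLM h a)

end BilinLemmas

section ConfLinLemmas

variable {D : Module.End ℂ A} {Dm : Module.End ℂ M} {f : A → ℕ →₀ M}
  (hf : ConfLin D Dm f)
include hf

/-- A conformal linear map as a linear map. -/
noncomputable def cfLM : A →ₗ[ℂ] (ℕ →₀ M) where
  toFun := f
  map_add' := hf.1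
  map_smul' := hf.2.1

lemma cf_add (a a' : A) : f (a + a') = f a + f a' := hf.1 a a'
lemma cf_smul (r : ℂ) (a : A) : f (r • a) = r • f a := hf.2.1 r a
lemma cf_sub (a a' : A) : f (a - a') = f a - f a' := map_sub (cfLM hf) a a'
lemma cf_neg (a : A) : f (-a) = - f a := map_neg (cfLM hf) a
lemma cf_zero : f 0 = 0 := map_zero (cfLM hf)
lemma cf_sum {ι : Type*} (s : Finset ι) (g : ι → A) :
    f (∑ i ∈ s, g i) = ∑ i ∈ s, f (g i) := map_sum (cfLM hf) g s

lemma ev_Dhom (m : ℂ) (x : A) : ev m (Dhom f x) = (-m) • ev m (f x) := by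
  show ev m (- Finsupp.mapDomain (· + 1) (f x)) = (-m) • ev m (f x)
  rw [ev_neg, ev_mapDomain, neg_smul]

end ConfLinLemmas

section SubstNegLemmas

variable (D : Module.End ℂ A)

lemma substNeg_zero : substNeg D (0 : ℕ →₀ A) = 0 := Finsupp.sum_zero_index

lemma substNeg_add (p q : ℕ →₀ A) :
    substNeg D (p + q) = substNeg D p + substNeg D q := by
  refine Finsupp.sum_add_index' (fun i => ?_) (fun i x y => ?_)
  · simp
  · rw [← Finset.sum_add_distrib]
    refine Finset.sum_congr rfl fun k _ => ?_
    rw [← Finsupp.single_add, ← smul_add, map_add]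

lemma substNeg_single (i : ℕ) (c : A) :
    substNeg D (Finsupp.single i c) = ∑ k ∈ Finset.range (i + 1),
      Finsupp.single k ((((-1 : ℂ) ^ k * (i.choose k : ℂ))) • ((-D) ^ (i - k)) c) :=
  Finsupp.sum_single_index (by simp)

/-- First-argument power lemma: `op ((-D)^j a) v` evaluated at `L` is
`L^j` times `op a v` evaluated at `L`. -/
lemma pow_negD_left {op : A → M → ℕ →₀ V} (h : Bilin op)
    (hs : ∀ (L : ℂ) (a : A) (v : M), ev L (op (D a) v) = (-L) • ev L (op a v)) :
    ∀ (j : ℕ) (L : ℂ) (a : A) (v : M),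
      ev L (op (((-D) ^ j) a) v) = L ^ j • ev L (op a v) := by
  intro j
  induction j with
  | zero => intro L a v; simp
  | succ j ih =>
    intro L a v
    have h1 : ((-D) ^ (j + 1)) a = ((-D) ^ j) ((-D) a) := by
      rw [pow_succ]; rfl
    have h2 : (-D) a = -(D a) := rfl
    rw [h1, ih, h2, bl_neg₁ h, ev_neg, hs]
    module

/-- Main substitution lemma for a first argument with `sesq1`-type behaviour. -/
lemma ev_op_substNeg {op : A → M → ℕ →₀ V} (h : Bilin op)
    (hs : ∀ (L : ℂ) (a : A) (v : M), ev L (op (D a) v) = (-L) • ev L (op a v))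
    (L l : ℂ) (p : ℕ →₀ A) (v : M) :
    ev L (op (ev l (substNeg D p)) v) = ev L (op (ev (L - l) p) v) := by
  induction p using Finsupp.induction_linear with
  | zero => rw [substNeg_zero, ev_zero, ev_zero]
  | add p q hp hq =>
    rw [substNeg_add, ev_add, bl_add₁ h, ev_add, hp, hq, ev_add, bl_add₁ h, ev_add]
  | single i c =>
    rw [substNeg_single, ev_sum, ev_single]
    simp only [ev_single]
    rw [bl_sum₁ h, ev_sum]
    simp only [bl_smul₁ h, ev_smul, pow_negD_left D h hs, smul_smul]
    rw [← Finset.sum_smul]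
    congr 1
    have hb : (L - l) ^ i = ∑ k ∈ Finset.range (i + 1),
        (-l) ^ k * L ^ (i - k) * (i.choose k : ℂ) := by
      rw [← neg_add_eq_sub, add_pow]
    rw [hb]
    refine Finset.sum_congr rfl fun k _ => ?_
    rw [neg_pow]
    ring

end SubstNegLemmas

section SubstNegF

variable {D : Module.End ℂ A} {Dm : Module.End ℂ M} {f : A → ℕ →₀ M}
  {ra : M → A → ℕ →₀ M}

lemma pow_negD_f (hf : ConfLin D Dm f) (hra : Bilin ra)
    (hrs : ∀ (L : ℂ) (v : M) (a : A), ev L (ra (Dm v) a) = (-L) • ev L (ra v a)) :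
    ∀ (j : ℕ) (L g : ℂ) (x c : A),
      ev L (ra (ev g (f (((-D) ^ j) x))) c) = (L - g) ^ j • ev L (ra (ev g (f x)) c) := by
  intro j
  induction j with
  | zero => intro L g x c; simp
  | succ j ih =>
    intro L g x c
    have h1 : ((-D) ^ (j + 1)) x = ((-D) ^ j) ((-D) x) := by
      rw [pow_succ]; rfl
    have h2 : (-D) x = -(D x) := rfl
    rw [h1, ih, h2, cf_neg hf, ev_neg, hf.2.2, bl_neg₁ hra, ev_neg, bl_add₁ hra,
      ev_add, bl_smul₁ hra, ev_smul, hrs]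
    module

lemma ev_ra_f_substNeg (hf : ConfLin D Dm f) (hra : Bilin ra)
    (hrs : ∀ (L : ℂ) (v : M) (a : A), ev L (ra (Dm v) a) = (-L) • ev L (ra v a))
    (L g l : ℂ) (p : ℕ →₀ A) (c : A) :
    ev L (ra (ev g (f (ev l (substNeg D p)))) c) =
      ev L (ra (ev g (f (ev (L - g - l) p))) c) := by
  induction p using Finsupp.induction_linear with
  | zero => rw [substNeg_zero, ev_zero, ev_zero]
  | add p q hp hq =>
    rw [substNeg_add, ev_add, cf_add hf, ev_add, bl_add₁ hra, ev_add, hp, hq,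
      ev_add, cf_add hf, ev_add, bl_add₁ hra, ev_add]
  | single i c' =>
    rw [substNeg_single, ev_sum, ev_single]
    simp only [ev_single]
    rw [cf_sum hf, ev_sum, bl_sum₁ hra, ev_sum]
    simp only [cf_smul hf, ev_smul, bl_smul₁ hra, ev_smul,
      pow_negD_f hf hra hrs, smul_smul]
    rw [← Finset.sum_smul]
    congr 1
    have hb : (L - g - l) ^ i = ∑ k ∈ Finset.range (i + 1),
        (-l) ^ k * (L - g) ^ (i - k) * (i.choose k : ℂ) := by
      rw [show L - g - l = -l + (L - g) by ring, add_pow]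
    rw [hb]
    refine Finset.sum_congr rfl fun k _ => ?_
    rw [neg_pow]
    ring

end SubstNegF

end Aux

end LSCpaper

namespace LSCpaper

/-- Let `A` be a left-symmetric conformal algebra and `M` a
conformal module over `A`.  The `λ`-action
`(a_λ f)_{λ+μ}(b) = a_λ(f_μ(b)) + (f_μ(a))_{λ+μ} b - f_μ(a_λ b)` makes
`CHom(A, M)` a conformal module over the sub-adjacent Lie conformal algebra
`g(A)`: it satisfies (i) `(∂a)_λ f = -λ (a_λ f)`, (ii) `a_λ (∂f) = (∂+λ)(a_λ f)`
(evaluated at total subscript `λ+μ` this reads `-μ • (a_λ f)_{λ+μ}`),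
(iii) the action of `a` sends `CHom(A,M)` to itself (conformal linearity of
`a_λ f` in its argument), and (iv) the Jacobi rule
`a_λ(b_μ f) - b_μ(a_λ f) = [a_λ b]_{λ+μ} f`, all evaluations being taken at
arbitrary complex values of the formal variables. -/
theorem chom_gA_module {A M : Type*} [AddCommGroup A] [Module ℂ A]
    [AddCommGroup M] [Module ℂ M]
    (D : Module.End ℂ A) (Dm : Module.End ℂ M) (mul : A → A → ℕ →₀ A)
    (la : A → M → ℕ →₀ M) (ra : M → A → ℕ →₀ M)
    (hA : IsLSC D mul) (hM : IsLSCMod D Dm mul la ra) :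
    (∀ (l m : ℂ) (a b : A) (f : A → ℕ →₀ M), ConfLin D Dm f →
      Tact mul la ra l m (D a) f b = (-l) • Tact mul la ra l m a f b) ∧
    (∀ (l m : ℂ) (a b : A) (f : A → ℕ →₀ M), ConfLin D Dm f →
      Tact mul la ra l m a (Dhom f) b = (-m) • Tact mul la ra l m a f b) ∧
    (∀ (l m : ℂ) (a b : A) (f : A → ℕ →₀ M), ConfLin D Dm f →
      Tact mul la ra l m a f (D b) =
        Dm (Tact mul la ra l m a f b) + (l + m) • Tact mul la ra l m a f b) ∧
    (∀ (l m g : ℂ) (a b c : A) (f : A → ℕ →₀ M), ConfLin D Dm f →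
      (ev l (la a (Tact mul la ra m g b f c))
          + ev (l + m + g) (ra (Tact mul la ra m g b f a) c)
          - Tact mul la ra m g b f (ev l (mul a c)))
        - (ev m (la b (Tact mul la ra l g a f c))
          + ev (l + m + g) (ra (Tact mul la ra l g a f b) c)
          - Tact mul la ra l g a f (ev m (mul b c)))
      = Tact mul la ra (l + m) g (brEv D mul l a b) f c) := by
  obtain ⟨hlb, hrb, hls1, hls2, hrs1, hrs2, hlc, hrc⟩ := hM
  refine ⟨?_, ?_, ?_, ?_⟩
  · -- (i)
    intro l m a b f hf
    simp only [Tact]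
    rw [hls1, hf.2.2 m a, bl_add₁ hrb, bl_smul₁ hrb, ev_add, ev_smul, hrs1,
      hA.sesq1 l a b, cf_smul hf, ev_smul]
    module
  · -- (ii)
    intro l m a b f hf
    simp only [Tact]
    rw [ev_Dhom hf m b, ev_Dhom hf m a, ev_Dhom hf m (ev l (mul a b)),
      bl_smul₂ hlb, ev_smul, bl_smul₁ hrb, ev_smul]
    module
  · -- (iii)
    intro l m a b f hf
    simp only [Tact]
    rw [hf.2.2 m b, bl_add₂ hlb, bl_smul₂ hlb, ev_add, ev_smul, hls2, hrs2,
      hA.sesq2 l a b, cf_add hf, cf_smul hf, ev_add, ev_smul,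
      hf.2.2 m (ev l (mul a b))]
    simp only [map_add, map_sub]
    module
  · -- (iv)
    intro l m g a b c f hf
    simp only [Tact, brEv]
    simp only [bl_add₂ hlb, bl_sub₂ hlb, bl_add₁ hrb, bl_sub₁ hrb,
      bl_sub₁ hlb, bl_sub₁ hA.bilin, cf_sub hf, ev_add, ev_sub]
    rw [ev_op_substNeg D hlb hls1 (l + m) l (mul b a) (ev g (f c)),
      ev_ra_f_substNeg hf hrb hrs1 (l + m + g) g l (mul b a) c,
      ev_op_substNeg D hA.bilin hA.sesq1 (l + m) l (mul b a) c,
      show l + m - l = m by ring, show l + m + g - g - l = m by ring]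
    have h1 := hlc l m a b (ev g (f c))
    have h2 := hrc l (m + g) a (ev g (f b)) c
    have h3 := hrc m (l + g) b (ev g (f a)) c
    rw [show l + (m + g) = l + m + g by ring] at h2
    rw [show m + (l + g) = l + m + g by ring] at h3
    have h4 : ev g (f (ev (l + m) (mul (ev l (mul a b)) c)))
        - ev g (f (ev l (mul a (ev m (mul b c)))))
        = ev g (f (ev (l + m) (mul (ev m (mul b a)) c)))
        - ev g (f (ev m (mul b (ev l (mul a c))))) := by
      have h := congrArg (fun x => ev g (f x)) (hA.lsym l m a b c)
      simpa only [cf_sub hf, ev_sub] using h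
    linear_combination (norm := module) h4 + h3 - h2 - h1

end LSCpaper
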